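/- The function ψ(z) = (1 + z/4)²/(1 - z/4)² satisfies ψ^{(k)}(x) ≥ 0 for all integers k ≥ 0 and all x ∈ [-4, 0], and ψ(0) = ψ'(0) = ψ''(0) = 1 (so ψ approximates exp to order 2 at the origin). -/

import Mathlib

private lemma hasDerivAt_ip (n : ℕ) {x : ℝ} (hx : x ≠ 4) :
    HasDerivAt (fun z : ℝ => ((4 - z) ^ (n+1))⁻¹) ((n+1) * ((4 - x) ^ (n+2))⁻¹) x := by
  have hx4 : (4:ℝ) - x ≠ 0 := sub_ne_zero.mpr (Ne.symm hx)
  have h1 : HasDerivAt (fun z : ℝ => 4 - z) (-1) x := by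
    simpa using (hasDerivAt_id x).const_sub 4
  have h3 := (h1.pow (n+1)).inv (pow_ne_zero _ hx4)
  refine h3.congr_deriv ?_
  have hp : ((4 - x) ^ (n+1))^2 = (4 - x) ^ (n+2) * (4 - x) ^ n := by
    rw [← pow_mul, ← pow_add]; ring_nf
  simp only [Pi.pow_apply, Nat.add_sub_cancel]; push_cast; field_simp
  rw [hp]
  ring

private noncomputable def g : ℝ → ℝ := fun z => 64 * ((4 - z) ^ 2)⁻¹ - 16 * ((4 - z) ^ 1)⁻¹ + 1

private lemma iter_g (k : ℕ) : ∀ x : ℝ, x ≠ 4 →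
    iteratedDeriv (k+1) g x
      = 64 * (Nat.factorial (k+2)) * ((4 - x) ^ (k+3))⁻¹ - 16 * (Nat.factorial (k+1)) * ((4 - x) ^ (k+2))⁻¹ := by
  induction k with
  | zero =>
    intro x hx
    rw [iteratedDeriv_one]
    have h : HasDerivAt g (64 * (2 * ((4-x)^3)⁻¹) - 16 * (1 * ((4-x)^2)⁻¹) + 0) x := by
      exact (((hasDerivAt_ip 1 hx).const_mul 64).sub
        ((hasDerivAt_ip 0 hx).const_mul 16)).add_const 1 |>.congr_deriv (by push_cast; ring)
    rw [h.deriv]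
    norm_num [Nat.factorial]
    ring
  | succ k ih =>
    intro x hx
    rw [iteratedDeriv_succ]
    have hev : iteratedDeriv (k+1) g =ᶠ[nhds x]
        fun y => 64 * (Nat.factorial (k+2)) * ((4 - y) ^ (k+2+1))⁻¹ - 16 * (Nat.factorial (k+1)) * ((4 - y) ^ (k+1+1))⁻¹ := by
      filter_upwards [isOpen_ne.mem_nhds hx] with y hy using ih y hy
    rw [hev.deriv_eq]
    have h := ((hasDerivAt_ip (k+2) hx).const_mul (64 * (Nat.factorial (k+2) : ℝ))).sub
        ((hasDerivAt_ip (k+1) hx).const_mul (16 * (Nat.factorial (k+1) : ℝ)))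
    erw [h.deriv]
    have e1 : ((Nat.factorial (k+3)) : ℝ) = (k+3) * (Nat.factorial (k+2)) := by
      rw [show k+3 = (k+2)+1 from rfl, Nat.factorial_succ]; push_cast; ring
    have e2 : ((Nat.factorial (k+2)) : ℝ) = (k+2) * (Nat.factorial (k+1)) := by
      rw [show k+2 = (k+1)+1 from rfl, Nat.factorial_succ]; push_cast; ring
    simp only [show k+1+2 = k+3 from rfl, show k+1+3 = k+4 from rfl,
      show k+1+1 = k+2 from rfl, show k+2+2 = k+4 from rfl, show k+2+1 = k+3 from rfl]
    rw [e1, e2]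
    generalize ((4 - x) ^ (k+4))⁻¹ = A
    generalize ((4 - x) ^ (k+3))⁻¹ = B
    push_cast
    ring

private lemma psi_eq_g {x : ℝ} (hx : x < 4) :
    (1 + x / 4) ^ 2 / (1 - x / 4) ^ 2 = g x := by
  have h4 : (4:ℝ) - x ≠ 0 := by linarith
  have h4' : (1:ℝ) - x/4 ≠ 0 := by intro h; apply h4; linarith
  unfold g
  field_simp
  ring

private lemma psi_ev (x : ℝ) (hx : x < 4) :
    (fun z : ℝ => (1 + z / 4) ^ 2 / (1 - z / 4) ^ 2) =ᶠ[nhds x] g := by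
  filter_upwards [isOpen_Iio.mem_nhds (show x ∈ Set.Iio (4:ℝ) from hx)] with y hy
  exact psi_eq_g hy


/-- The function `ψ(z) = (1 + z/4)²/(1 - z/4)²` is absolutely monotonic on
`[-4, 0]` (all derivatives nonnegative there) and approximates the
exponential to order 2 at the origin: `ψ(0) = ψ'(0) = ψ''(0) = 1`. -/
theorem psi_222_absolutely_monotonic :
    let ψ : ℝ → ℝ := fun z => (1 + z / 4) ^ 2 / (1 - z / 4) ^ 2
    (∀ (k : ℕ) (x : ℝ), -4 ≤ x → x ≤ 0 → 0 ≤ iteratedDeriv k ψ x) ∧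
      ψ 0 = 1 ∧ deriv ψ 0 = 1 ∧ iteratedDeriv 2 ψ 0 = 1 := by
  intro ψ
  have h04 : (0:ℝ) < 4 := by norm_num
  refine ⟨?_, by norm_num, ?_, ?_⟩
  · intro k x hx1 hx2
    have hx4 : x < 4 := by linarith
    have hne : x ≠ 4 := ne_of_lt hx4
    have hpos : (0:ℝ) < 4 - x := by linarith
    match k with
    | 0 =>
      rw [iteratedDeriv_zero]
      exact div_nonneg (sq_nonneg _) (sq_nonneg _)
    | k + 1 =>
      rw [(psi_ev x hx4).iteratedDeriv_eq (k+1), iter_g k x hne]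
      have key : 64 * (Nat.factorial (k+2) : ℝ) * ((4 - x) ^ (k+3))⁻¹
          - 16 * (Nat.factorial (k+1)) * ((4 - x) ^ (k+2))⁻¹
          = 16 * (Nat.factorial (k+1) : ℝ) * ((4 - x) ^ (k+3))⁻¹ * (4*(k+2) - (4-x)) := by
        have e2 : ((Nat.factorial (k+2)) : ℝ) = (k+2) * (Nat.factorial (k+1)) := by
          rw [show k+2 = (k+1)+1 from rfl, Nat.factorial_succ]; push_cast; ring
        rw [e2]
        field_simp
        ring
      rw [key]
      have hk : (0:ℝ) ≤ 4*(k+2) - (4-x) := by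
        have : (0:ℝ) ≤ (k:ℝ) := Nat.cast_nonneg k
        linarith
      positivity
  · have hd : deriv ψ 0 = deriv g 0 := (psi_ev 0 h04).deriv_eq
    rw [hd, ← iteratedDeriv_one, iter_g 0 0 (by norm_num)]
    norm_num [Nat.factorial]
  · rw [(psi_ev 0 h04).iteratedDeriv_eq 2, iter_g 1 0 (by norm_num)]
    norm_num [Nat.factorial]
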